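/- Let G be a connected non-bipartite graph on n vertices and let ℓ = (1/2,…,1/2) ∈ ℝⁿ. Then ℝ₊B ⊆ {w ∈ ℝ^{n+1} : w·(−ℓ,1) ≥ 0}, and the hyperplane {w : w·(−ℓ,1) = 0} contains n linearly independent vectors from {(v₁,1),…,(v_q,1)}; i.e., {w : w·(−ℓ,1)=0} ∩ ℝ₊B is a facet of the (n+1)-dimensional cone ℝ₊B. -/

import Mathlib

open NNReal

/-- The set `B = {(e₁,1),…,(e_n,1)} ∪ {(v,1) : v edge characteristic vector} ∪ {e_{n+1}}`
inside `ℝⁿ × ℝ`. -/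
def graphGenSetR (n : ℕ) (G : SimpleGraph (Fin n)) : Set ((Fin n → ℝ) × ℝ) :=
  {p | ∃ i : Fin n, p = (Pi.single i 1, 1)} ∪
  {p | ∃ a b : Fin n, G.Adj a b ∧ p = (Pi.single a 1 + Pi.single b 1, 1)} ∪
  {((0 : Fin n → ℝ), 1)}

/-- The set of edge characteristic vectors. -/
def edgeSet' (n : ℕ) (G : SimpleGraph (Fin n)) : Set (Fin n → ℝ) :=
  {w | ∃ a b : Fin n, G.Adj a b ∧ w = Pi.single a 1 + Pi.single b 1}

lemma walk_mem {n : ℕ} {G : SimpleGraph (Fin n)} {a b : Fin n} (p : G.Walk a b) :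
    Pi.single a (1:ℝ) - (-1:ℝ)^p.length • (Pi.single b 1 : Fin n → ℝ) ∈
      Submodule.span ℝ (edgeSet' n G) := by
  induction p with
  | nil => simp
  | @cons a x b h p ih =>
    have he : (Pi.single a (1:ℝ) + Pi.single x 1) ∈ Submodule.span ℝ (edgeSet' n G) :=
      Submodule.subset_span ⟨a, x, h, rfl⟩
    have key : Pi.single a (1:ℝ) - (-1:ℝ)^(SimpleGraph.Walk.cons h p).length • (Pi.single b 1 : Fin n → ℝ)
        = (Pi.single a (1:ℝ) + Pi.single x 1)
          - (Pi.single x (1:ℝ) - (-1:ℝ)^p.length • (Pi.single b 1 : Fin n → ℝ)) := by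
      rw [SimpleGraph.Walk.length_cons, pow_succ]
      module
    rw [key]
    exact Submodule.sub_mem _ he ih

lemma edge_span_top {n : ℕ} {G : SimpleGraph (Fin n)} (hconn : G.Connected)
    (hodd : ∃ (v : Fin n) (c : G.Walk v v), c.IsCycle ∧ Odd c.length) :
    Submodule.span ℝ (edgeSet' n G) = ⊤ := by
  obtain ⟨v, c, _, hc⟩ := hodd
  set S := Submodule.span ℝ (edgeSet' n G)
  have hv : Pi.single v (1:ℝ) ∈ S := by
    have := walk_mem (G := G) c
    rw [hc.neg_one_pow] at this
    have h2 : (2:ℝ) • (Pi.single v 1 : Fin n → ℝ) ∈ S := by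
      convert this using 1
      module
    have := S.smul_mem (1/2 : ℝ) h2
    simpa using this
  have hu : ∀ u : Fin n, Pi.single u (1:ℝ) ∈ S := by
    intro u
    obtain ⟨p⟩ := hconn.preconnected u v
    have h1 := walk_mem (G := G) p
    have : Pi.single u (1:ℝ) =
        (Pi.single u (1:ℝ) - (-1:ℝ)^p.length • (Pi.single v 1 : Fin n → ℝ))
          + (-1:ℝ)^p.length • (Pi.single v 1 : Fin n → ℝ) := by module
    rw [this]
    exact S.add_mem h1 (S.smul_mem _ hv)
  rw [eq_top_iff, ← (Pi.basisFun ℝ (Fin n)).span_eq]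
  refine Submodule.span_le.2 ?_
  rintro _ ⟨i, rfl⟩
  simpa [Pi.basisFun_apply] using hu i

/-- For a connected non-bipartite graph `G` (one containing an odd cycle) and
`ℓ = (1/2,…,1/2)`, the cone `ℝ₊B` lies in the halfspace `{w : w·(−ℓ,1) ≥ 0}`
(i.e. `Σᵢ w̃ᵢ ≤ 2b`), and the hyperplane `{w : w·(−ℓ,1) = 0}` contains `n` linearly
independent vectors among `(v₁,1),…,(v_q,1)`: the intersection with `ℝ₊B` is a facet. -/
theorem nonBipartite_gives_facet {n : ℕ} (G : SimpleGraph (Fin n)) (hconn : G.Connected)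
    (hodd : ∃ (v : Fin n) (c : G.Walk v v), c.IsCycle ∧ Odd c.length) :
    (∀ w ∈ Submodule.span ℝ≥0 (graphGenSetR n G), ∑ i : Fin n, w.1 i ≤ 2 * w.2) ∧
      ∃ f : Fin n → (Fin n → ℝ) × ℝ, LinearIndependent ℝ f ∧
        ∀ j : Fin n,
          (∃ a b : Fin n, G.Adj a b ∧ f j = (Pi.single a 1 + Pi.single b 1, 1))
            ∧ ∑ i : Fin n, (f j).1 i = 2 * (f j).2 := by
  constructor
  · intro w hw
    induction hw using Submodule.span_induction with
    | mem x hx =>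
      rcases hx with (⟨i, rfl⟩ | ⟨a, b, hab, rfl⟩) | hx
      · simp
      · have hab' : a ≠ b := hab.ne
        simp [Pi.single_apply, Finset.sum_add_distrib]
        norm_num
      · simp at hx; subst hx; simp
    | zero => simp
    | add x y _ _ hx hy =>
      simp only [Prod.fst_add, Prod.snd_add, Pi.add_apply, Finset.sum_add_distrib]
      linarith
    | smul c x _ hx =>
      simp only [Prod.smul_fst, Prod.smul_snd, Pi.smul_apply, NNReal.smul_def, smul_eq_mul,
        ← Finset.mul_sum]
      calc (c:ℝ) * ∑ i, x.1 i ≤ (c:ℝ) * (2 * x.2) :=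
            mul_le_mul_of_nonneg_left hx c.coe_nonneg
        _ = 2 * ((c:ℝ) * x.2) := by ring
  · have htop := edge_span_top hconn hodd
    obtain ⟨s, hsub, hspan, hli⟩ := exists_linearIndependent ℝ (edgeSet' n G)
    rw [htop] at hspan
    have hsp' : ⊤ ≤ Submodule.span ℝ (Set.range (Subtype.val : s → (Fin n → ℝ))) := by
      rw [Subtype.range_coe, hspan]
    let hB : Module.Basis s ℝ (Fin n → ℝ) := Module.Basis.mk hli hsp'
    have e : Fin n ≃ s := (Pi.basisFun ℝ (Fin n)).indexEquiv hB
    set g : Fin n → (Fin n → ℝ) := fun j => ((e j : s) : Fin n → ℝ) with hg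
    have hgli : LinearIndependent ℝ g := by
      have := (hB.reindex e.symm).linearIndependent
      convert this using 1
      funext j
      simp only [hg, Module.Basis.reindex_apply, Equiv.symm_symm, hB, Module.Basis.mk_apply]
    refine ⟨fun j => (g j, 1), ?_, ?_⟩
    · refine LinearIndependent.of_comp (LinearMap.fst ℝ (Fin n → ℝ) ℝ) ?_
      convert hgli using 1
      rfl
    · intro j
      have hmem : g j ∈ edgeSet' n G := hsub (e j).2
      obtain ⟨a, b, hab, hab2⟩ := hmem
      refine ⟨⟨a, b, hab, by simp [hab2]⟩, ?_⟩
      simp only [hab2]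
      have : a ≠ b := hab.ne
      simp [Pi.single_apply, Finset.sum_add_distrib]
      norm_num
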